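/- Let A be a central arrangement of rank r. Suppose B ⊆ A consists of exactly r hyperplanes with r(∩_{H∈B} H) = r and lc(B) = A (i.e. B is an lc-basis of A). Then A is combinatorially formal. -/

import Mathlib

open Submodule

section ArrangementBasics

variable {𝕂 : Type*} [Field 𝕂] {V : Type*} [AddCommGroup V] [Module 𝕂 V]

/-- `H` is a (linear) hyperplane: the kernel of a nonzero linear form. -/
def IsHyperplane (H : Submodule 𝕂 V) : Prop :=
  ∃ f : Module.Dual 𝕂 V, f ≠ 0 ∧ LinearMap.ker f = H

/-- A central arrangement: a finite set of linear hyperplanes. -/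
def IsArrangement (A : Set (Submodule 𝕂 V)) : Prop :=
  A.Finite ∧ ∀ H ∈ A, IsHyperplane H

/-- The intersection lattice `L(A)`: all intersections of subsets of `A`
(with the ambient space `⊤ = sInf ∅` included). -/
def interLattice (A : Set (Submodule 𝕂 V)) : Set (Submodule 𝕂 V) :=
  {X | ∃ B ⊆ A, X = sInf B}

/-- The rank of an intersection: its codimension in the ambient space. -/
noncomputable def rk (X : Submodule 𝕂 V) : ℕ := Module.finrank 𝕂 (V ⧸ X)

/-- The localization `A_X` of `A` at `X`: all hyperplanes of `A` containing `X`. -/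
def locz (A : Set (Submodule 𝕂 V)) (X : Submodule 𝕂 V) : Set (Submodule 𝕂 V) :=
  {H | H ∈ A ∧ X ≤ H}

/-- The restriction `A^Z` of `A` to `Z`, an arrangement in (the vector space) `Z`:
the subspaces `Z ∩ H` for `H ∈ A ∖ A_Z`, viewed as submodules of `Z`. -/
def restr (A : Set (Submodule 𝕂 V)) (Z : Submodule 𝕂 V) : Set (Submodule 𝕂 ↥Z) :=
  {K | ∃ H ∈ A, ¬ Z ≤ H ∧ K = (Z ⊓ H).comap Z.subtype}

/-- `α` is a choice of defining linear forms for the arrangement `A`. -/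
def IsDefiningForms (A : Set (Submodule 𝕂 V)) (α : Submodule 𝕂 V → Module.Dual 𝕂 V) : Prop :=
  ∀ H ∈ A, LinearMap.ker (α H) = H

/-- The relation space `F(A)` with respect to the chosen defining forms `α`:
the kernel of `⊕_{H ∈ A} 𝕂·e_H → V*`, `e_H ↦ α_H`, realized as the space of finitely
supported coefficient functions supported on `A` whose linear combination vanishes. -/
noncomputable def relSpace (A : Set (Submodule 𝕂 V)) (α : Submodule 𝕂 V → Module.Dual 𝕂 V) :
    Submodule 𝕂 (Submodule 𝕂 V →₀ 𝕂) :=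
  Finsupp.supported 𝕂 𝕂 A ⊓ LinearMap.ker (Finsupp.linearCombination 𝕂 α)

/-- `F_2(A)`: the span of the elements of `F(A)` of length at most `3`. -/
noncomputable def relSpace2 (A : Set (Submodule 𝕂 V)) (α : Submodule 𝕂 V → Module.Dual 𝕂 V) :
    Submodule 𝕂 (Submodule 𝕂 V →₀ 𝕂) :=
  Submodule.span 𝕂 {c | c ∈ relSpace A α ∧ c.support.card ≤ 3}

/-- `A` is formal if `F_2(A) = F(A)` (for any choice of defining forms). -/
def IsFormal (A : Set (Submodule 𝕂 V)) : Prop :=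
  ∀ α : Submodule 𝕂 V → Module.Dual 𝕂 V,
    IsDefiningForms A α → relSpace2 A α = relSpace A α

end ArrangementBasics


section LineClosure

variable {𝕂 : Type*} [Field 𝕂] {V : Type*} [AddCommGroup V] [Module 𝕂 V]

/-- A subset `B` of the arrangement `A` is line-closed if for every pair
`H, H' ∈ B` one has `A_{H ∩ H'} ⊆ B`. -/
def IsLineClosed (A B : Set (Submodule 𝕂 V)) : Prop :=
  B ⊆ A ∧ ∀ H ∈ B, ∀ H' ∈ B, locz A (H ⊓ H') ⊆ B

/-- The line closure `lc(B)` of `B` in `A`: the intersection of all line-closed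
subsets of `A` containing `B`. -/
def lineClosure (A B : Set (Submodule 𝕂 V)) : Set (Submodule 𝕂 V) :=
  ⋂₀ {C | IsLineClosed A C ∧ B ⊆ C}

end LineClosure

/-- `A` is combinatorially formal: every central arrangement (over any field, in any
finite-dimensional space) whose intersection lattice is isomorphic (as a poset) to
that of `A` is formal. -/
def IsCombinatoriallyFormal {𝕂 : Type*} [Field 𝕂] {V : Type*} [AddCommGroup V] [Module 𝕂 V]
    (A : Set (Submodule 𝕂 V)) : Prop :=
  ∀ (𝕂' : Type) [Field 𝕂'] (ℓ' : ℕ) (B : Set (Submodule 𝕂' (Fin ℓ' → 𝕂'))),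
    IsArrangement B →
    Nonempty (↥(interLattice A) ≃o ↥(interLattice B)) →
    IsFormal B

section Aux

variable {𝕂 : Type*} [Field 𝕂] {V : Type*} [AddCommGroup V] [Module 𝕂 V]

lemma IsHyperplane.ne_top {H : Submodule 𝕂 V} (h : IsHyperplane H) : H ≠ ⊤ := by
  obtain ⟨f, hf, rfl⟩ := h
  simpa [LinearMap.ker_eq_top] using hf

lemma IsHyperplane.isCoatom {H : Submodule 𝕂 V} (h : IsHyperplane H) : IsCoatom H := by
  obtain ⟨f, hf, rfl⟩ := h
  constructor
  · simpa [LinearMap.ker_eq_top] using hf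
  · intro X hX
    obtain ⟨v, hvX, hv⟩ := SetLike.exists_of_lt hX
    have hfv : f v ≠ 0 := hv
    rw [eq_top_iff]
    intro w _
    have h1 : w - (f w / f v) • v ∈ LinearMap.ker f := by
      simp [LinearMap.mem_ker, map_sub, map_smul, div_mul_cancel₀ _ hfv]
    have h2 : w - (f w / f v) • v ∈ X := hX.le h1
    have h3 := X.add_mem h2 (X.smul_mem (f w / f v) hvX)
    simpa using h3

lemma ker_inf_ker_le_ker {f g h : Module.Dual 𝕂 V}
    (hle : LinearMap.ker f ⊓ LinearMap.ker g ≤ LinearMap.ker h) :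
    ∃ a b : 𝕂, h = a • f + b • g := by
  have h2 : ⨅ b : Bool, LinearMap.ker (if b then f else g) ≤ LinearMap.ker h := by
    rw [iInf_bool_eq]; simpa using hle
  have h3 := mem_span_of_iInf_ker_le_ker h2
  rw [mem_span_range_iff_exists_fun] at h3
  obtain ⟨c, hc⟩ := h3
  refine ⟨c true, c false, ?_⟩
  rw [← hc, Fintype.sum_bool]
  simp

lemma finrank_eq_hyperplane [FiniteDimensional 𝕂 V] {H : Submodule 𝕂 V} (h : IsHyperplane H) :
    Module.finrank 𝕂 H + 1 = Module.finrank 𝕂 V := by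
  obtain ⟨f, hf, rfl⟩ := h
  have hr : LinearMap.range f = ⊤ := by
    obtain ⟨v, hv⟩ : ∃ v, f v ≠ 0 := by
      by_contra hc
      push_neg at hc
      exact hf (LinearMap.ext fun v => hc v)
    rw [eq_top_iff]
    intro c _
    exact ⟨(c / f v) • v, by simp [div_mul_cancel₀ _ hv]⟩
  have h1 := LinearMap.finrank_range_add_finrank_ker f
  rw [hr, finrank_top] at h1
  rw [Module.finrank_self] at h1
  omega


lemma rk_inf_le [FiniteDimensional 𝕂 V] (X H : Submodule 𝕂 V) (h : IsHyperplane H) :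
    rk (X ⊓ H) ≤ rk X + 1 := by
  have h1 := Submodule.finrank_sup_add_finrank_inf_eq X H
  have h2 := finrank_eq_hyperplane h
  have h3 : Module.finrank 𝕂 ↥(X ⊔ H) ≤ Module.finrank 𝕂 V := Submodule.finrank_le _
  have q1 := Submodule.finrank_quotient_add_finrank (X ⊓ H)
  have q2 := Submodule.finrank_quotient_add_finrank X
  unfold rk
  omega

lemma rk_top [FiniteDimensional 𝕂 V] : rk (⊤ : Submodule 𝕂 V) = 0 := by
  have q := Submodule.finrank_quotient_add_finrank (⊤ : Submodule 𝕂 V)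
  rw [finrank_top] at q
  unfold rk
  omega

lemma rk_sInf_le [FiniteDimensional 𝕂 V] {S : Set (Submodule 𝕂 V)} (hfin : S.Finite) :
    (∀ H ∈ S, IsHyperplane H) → rk (sInf S) ≤ S.ncard := by
  refine Set.Finite.induction_on (motive := fun s _ => (∀ H ∈ s, IsHyperplane H) → rk (sInf s) ≤ s.ncard) S hfin (fun _ => ?_) ?_
  · rw [sInf_empty, rk_top]
    simp
  · intro a s ha hsfin ih hyp
    rw [sInf_insert, Set.ncard_insert_of_notMem ha hsfin]
    calc rk (a ⊓ sInf s) = rk (sInf s ⊓ a) := by rw [inf_comm]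
      _ ≤ rk (sInf s) + 1 := rk_inf_le _ _ (hyp a (Set.mem_insert _ _))
      _ ≤ s.ncard + 1 := by
          have := ih (fun H hH => hyp H (Set.mem_insert_of_mem _ hH))
          omega

lemma indep_of_rk [FiniteDimensional 𝕂 V] {B : Set (Submodule 𝕂 V)} (hfin : B.Finite)
    (hyp : ∀ H ∈ B, IsHyperplane H) (hrk : rk (sInf B) = B.ncard) :
    ∀ H ∈ B, ¬ sInf (B \ {H}) ≤ H := by
  intro H hH hle
  have heq : sInf (B \ {H}) = sInf B := by
    apply le_antisymm
    · apply le_sInf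
      intro K hK
      by_cases hKH : K = H
      · exact hKH ▸ hle
      · exact sInf_le ⟨hK, hKH⟩
    · exact sInf_le_sInf Set.diff_subset
  have h1 : rk (sInf (B \ {H})) ≤ (B \ {H}).ncard :=
    rk_sInf_le hfin.diff (fun K hK => hyp K hK.1)
  have h2 : (B \ {H}).ncard = B.ncard - 1 := Set.ncard_diff_singleton_of_mem hH
  have h3 : 0 < B.ncard := (Set.ncard_pos hfin).2 ⟨H, hH⟩
  rw [heq, hrk] at h1
  omega

end Aux


section FormalCore
variable {𝕂 : Type*} [Field 𝕂] {V : Type*} [AddCommGroup V] [Module 𝕂 V]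

lemma coeffs_eq_zero {C B : Set (Submodule 𝕂 V)} (hBC : B ⊆ C)
    {α : Submodule 𝕂 V → Module.Dual 𝕂 V} (hα : IsDefiningForms C α)
    (hind : ∀ H ∈ B, ¬ sInf (B \ {H}) ≤ H)
    {b : Submodule 𝕂 V →₀ 𝕂} (hb : b ∈ Finsupp.supported 𝕂 𝕂 B)
    (h0 : Finsupp.linearCombination 𝕂 α b = 0) : b = 0 := by
  by_contra hne
  obtain ⟨H₀, hH₀⟩ := Finsupp.support_nonempty_iff.2 hne
  rw [Finsupp.mem_supported] at hb
  have hH₀B : H₀ ∈ B := hb hH₀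
  refine hind H₀ hH₀B ?_
  intro v hv
  have hval : ∀ K ∈ B \ {H₀}, α K v = 0 := by
    intro K hK
    have hvK : v ∈ K := (Submodule.mem_sInf.1 hv) K hK
    rw [← hα K (hBC hK.1)] at hvK
    exact hvK
  have hsum : (Finsupp.linearCombination 𝕂 α b) v = 0 := by rw [h0]; rfl
  rw [Finsupp.linearCombination_apply] at hsum
  have hsum2 : (b.sum fun i a => a • (α i) v) = 0 := by
    rw [← hsum]
    exact (map_finsuppSum (LinearMap.applyₗ v) b fun i a => a • α i).symm
  rw [Finsupp.sum] at hsum2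
  rw [Finset.sum_eq_single H₀ (fun K hK hKne => by
        rw [hval K ⟨hb hK, hKne⟩, smul_zero]) (fun h => absurd hH₀ h)] at hsum2
  have hbH₀ : b H₀ ≠ 0 := Finsupp.mem_support_iff.1 hH₀
  have : (α H₀) v = 0 := by
    rcases smul_eq_zero.1 hsum2 with h | h
    · exact absurd h hbH₀
    · exact h
  rw [← hα H₀ (hBC hH₀B)]
  exact this

lemma formal_of_lcBasis {C B : Set (Submodule 𝕂 V)} (hBC : B ⊆ C)
    (hind : ∀ H ∈ B, ¬ sInf (B \ {H}) ≤ H)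
    (hlc : lineClosure C B = C) : IsFormal C := by
  classical
  intro α hα
  have hF2F : relSpace2 C α ≤ relSpace C α := Submodule.span_le.2 fun c hc => hc.1
  refine le_antisymm hF2F ?_
  set M : Submodule 𝕂 (Submodule 𝕂 V →₀ 𝕂) := Finsupp.supported 𝕂 𝕂 B ⊔ relSpace2 C α with hM
  have hsingleM : ∀ (H : Submodule 𝕂 V) (a : 𝕂), Finsupp.single H (1:𝕂) ∈ M →
      Finsupp.single H a ∈ M := by
    intro H a hH
    have := M.smul_mem a hH
    rwa [Finsupp.smul_single', mul_one] at this
  have hsingleB : ∀ H ∈ B, Finsupp.single H (1:𝕂) ∈ M := by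
    intro H hH
    apply Submodule.mem_sup_left
    rw [Finsupp.mem_supported]
    intro x hx
    have hx2 : x ∈ ({H} : Finset (Submodule 𝕂 V)) := Finsupp.support_single_subset hx
    rw [Finset.mem_singleton] at hx2
    subst hx2
    exact hH
  have hTlc : IsLineClosed C {H | H ∈ C ∧ Finsupp.single H (1:𝕂) ∈ M} := by
    constructor
    · exact fun H hH => hH.1
    · rintro H ⟨hHC, hHM⟩ H' ⟨hH'C, hH'M⟩ K ⟨hKC, hle⟩
      have hker : LinearMap.ker (α H) ⊓ LinearMap.ker (α H') ≤ LinearMap.ker (α K) := by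
        rw [hα H hHC, hα H' hH'C, hα K hKC]; exact hle
      obtain ⟨a, b, hab⟩ := ker_inf_ker_le_ker hker
      set ρ : Submodule 𝕂 V →₀ 𝕂 :=
        Finsupp.single K 1 - Finsupp.single H a - Finsupp.single H' b with hρ
      have hρsupp : ρ.support ⊆ {K, H, H'} := by
        intro x hx
        rw [Finsupp.mem_support_iff] at hx
        by_contra hmem
        simp only [Finset.mem_insert, Finset.mem_singleton, not_or] at hmem
        apply hx
        rw [hρ, Finsupp.sub_apply, Finsupp.sub_apply,
          Finsupp.single_eq_of_ne' (Ne.symm hmem.1), Finsupp.single_eq_of_ne' (Ne.symm hmem.2.1),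
          Finsupp.single_eq_of_ne' (Ne.symm hmem.2.2)]
        simp
      have hρrel : ρ ∈ relSpace C α := by
        refine Submodule.mem_inf.2 ⟨?_, ?_⟩
        · rw [Finsupp.mem_supported]
          refine subset_trans (Finset.coe_subset.2 hρsupp) ?_
          intro x hx
          simp only [Finset.coe_insert, Set.mem_insert_iff, Finset.coe_singleton,
            Set.mem_singleton_iff] at hx
          rcases hx with rfl | rfl | rfl
          · exact hKC
          · exact hHC
          · exact hH'C
        · rw [LinearMap.mem_ker, hρ]
          simp only [map_sub, Finsupp.linearCombination_single, one_smul]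
          rw [hab]
          abel
      have hρ2 : ρ ∈ relSpace2 C α := by
        refine Submodule.subset_span ⟨hρrel, ?_⟩
        calc ρ.support.card ≤ ({K, H, H'} : Finset (Submodule 𝕂 V)).card :=
              Finset.card_le_card hρsupp
          _ ≤ 3 := by
              refine (Finset.card_insert_le _ _).trans ?_
              have := Finset.card_insert_le H ({H'} : Finset (Submodule 𝕂 V))
              simp only [Finset.card_singleton] at this ⊢
              omega
      refine ⟨hKC, ?_⟩
      have hKeq : Finsupp.single K (1:𝕂) = ρ + Finsupp.single H a + Finsupp.single H' b := by
        rw [hρ]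
        abel
      rw [hKeq]
      exact M.add_mem (M.add_mem (Submodule.mem_sup_right hρ2) (hsingleM H a hHM))
        (hsingleM H' b hH'M)
  have hBT : B ⊆ {H | H ∈ C ∧ Finsupp.single H (1:𝕂) ∈ M} :=
    fun H hH => ⟨hBC hH, hsingleB H hH⟩
  have hCT : C ⊆ {H | H ∈ C ∧ Finsupp.single H (1:𝕂) ∈ M} := by
    have hsub : lineClosure C B ⊆ {H | H ∈ C ∧ Finsupp.single H (1:𝕂) ∈ M} :=
      Set.sInter_subset_of_mem ⟨hTlc, hBT⟩
    rwa [hlc] at hsub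
  intro c hc
  obtain ⟨hc1, hc2⟩ := Submodule.mem_inf.1 hc
  have hcM : c ∈ M := by
    have hsub : c ∈ Finsupp.supported 𝕂 𝕂 {H | Finsupp.single H (1:𝕂) ∈ M} := by
      rw [Finsupp.mem_supported]
      intro x hx
      exact (hCT ((Finsupp.mem_supported 𝕂 c).1 hc1 hx)).2
    rw [Finsupp.supported_eq_span_single] at hsub
    refine Submodule.span_le.2 ?_ hsub
    rintro _ ⟨i, hi, rfl⟩
    exact hi
  obtain ⟨bb, hbb, f, hf, hsum⟩ := Submodule.mem_sup.1 hcM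
  have hfrel : f ∈ relSpace C α := hF2F hf
  have hb0 : Finsupp.linearCombination 𝕂 α bb = 0 := by
    have hfc : Finsupp.linearCombination 𝕂 α f = 0 := (Submodule.mem_inf.1 hfrel).2
    have : bb = c - f := by rw [← hsum]; abel
    rw [this, map_sub, hc2, hfc, sub_zero]
  have hbbz : bb = 0 := coeffs_eq_zero hBC hα hind hbb hb0
  rw [← hsum, hbbz, zero_add]
  exact hf

end FormalCore


section Transfer
variable {𝕂 : Type*} [Field 𝕂] {V : Type*} [AddCommGroup V] [Module 𝕂 V]
variable {𝕂' : Type*} [Field 𝕂'] {V' : Type*} [AddCommGroup V'] [Module 𝕂' V']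

/-- Order-theoretic predicate: `x` is maximal among non-top elements. -/
def MaxPt {A : Set (Submodule 𝕂 V)} (x : ↥(interLattice A)) : Prop :=
  (¬ ∀ z : ↥(interLattice A), z ≤ x) ∧
    ∀ y : ↥(interLattice A), x ≤ y → y ≤ x ∨ ∀ z : ↥(interLattice A), z ≤ y

lemma mem_interLattice_of_mem {A : Set (Submodule 𝕂 V)} {H : Submodule 𝕂 V} (hH : H ∈ A) :
    H ∈ interLattice A := ⟨{H}, by simpa using hH, sInf_singleton.symm⟩

lemma top_mem_interLattice (A : Set (Submodule 𝕂 V)) : ⊤ ∈ interLattice A :=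
  ⟨∅, Set.empty_subset _, sInf_empty.symm⟩

lemma sInf_mem_interLattice {A S : Set (Submodule 𝕂 V)} (hSA : S ⊆ A) :
    sInf S ∈ interLattice A := ⟨S, hSA, rfl⟩

lemma inf_mem_interLattice {A : Set (Submodule 𝕂 V)} {H H' : Submodule 𝕂 V}
    (hH : H ∈ A) (hH' : H' ∈ A) : H ⊓ H' ∈ interLattice A :=
  ⟨{H, H'}, by rintro x (rfl | rfl); exacts [hH, hH'], sInf_pair.symm⟩

lemma mem_iff_maxPt {A : Set (Submodule 𝕂 V)} (hA : IsArrangement A)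
    (x : ↥(interLattice A)) : x.1 ∈ A ↔ MaxPt x := by
  constructor
  · intro hx
    have hcoatom : IsCoatom x.1 := (hA.2 _ hx).isCoatom
    constructor
    · intro h
      have h2 : (⊤ : Submodule 𝕂 V) ≤ x.1 := h ⟨⊤, top_mem_interLattice A⟩
      exact hcoatom.1 (top_le_iff.1 h2)
    · intro y hxy
      rcases eq_or_lt_of_le hxy with heq | hlt
      · left
        exact le_of_eq heq.symm
      · right
        have hy : y.1 = ⊤ := hcoatom.2 y.1 hlt
        intro z
        show z.1 ≤ y.1
        rw [hy]
        exact le_top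
  · rintro ⟨hnt, hmax⟩
    obtain ⟨S, hSA, hSx⟩ := x.2
    rcases Set.eq_empty_or_nonempty S with rfl | ⟨H, hH⟩
    · exfalso
      apply hnt
      intro z
      show z.1 ≤ x.1
      rw [hSx, sInf_empty]
      exact le_top
    · have hxH : x.1 ≤ H := by rw [hSx]; exact sInf_le hH
      rcases hmax ⟨H, mem_interLattice_of_mem (hSA hH)⟩ hxH with h | h
      · have hxeq : x.1 = H := le_antisymm hxH h
        rw [hxeq]
        exact hSA hH
      · exfalso
        have h2 : (⊤ : Submodule 𝕂 V) ≤ H := h ⟨⊤, top_mem_interLattice A⟩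
        exact (hA.2 H (hSA hH)).ne_top (top_le_iff.1 h2)

lemma maxPt_map {A : Set (Submodule 𝕂 V)} {C : Set (Submodule 𝕂' V')}
    (e : ↥(interLattice A) ≃o ↥(interLattice C)) {x : ↥(interLattice A)}
    (hx : MaxPt x) : MaxPt (e x) := by
  obtain ⟨h1, h2⟩ := hx
  constructor
  · intro h
    apply h1
    intro z
    have := h (e z)
    exact e.le_iff_le.1 this
  · intro y hy
    have hxy : x ≤ e.symm y := by
      have := e.symm.monotone hy
      simpa using this
    rcases h2 (e.symm y) hxy with h | h
    · left
      have := e.monotone h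
      simpa using this
    · right
      intro z
      have := h (e.symm z)
      have h3 := e.monotone this
      simpa using h3

/-- The image of a set of hyperplanes under the lattice isomorphism. -/
def imap {A : Set (Submodule 𝕂 V)} {C : Set (Submodule 𝕂' V')}
    (e : ↥(interLattice A) ≃o ↥(interLattice C)) (S : Set (Submodule 𝕂 V)) :
    Set (Submodule 𝕂' V') :=
  {K | ∃ x : ↥(interLattice A), x.1 ∈ S ∧ ((e x) : Submodule 𝕂' V') = K}

lemma imap_subset {A : Set (Submodule 𝕂 V)} {C : Set (Submodule 𝕂' V')}
    (hA : IsArrangement A) (hC : IsArrangement C)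
    (e : ↥(interLattice A) ≃o ↥(interLattice C)) {S : Set (Submodule 𝕂 V)} (hSA : S ⊆ A) :
    imap e S ⊆ C := by
  rintro _ ⟨x, hxS, rfl⟩
  exact (mem_iff_maxPt hC (e x)).2 (maxPt_map e ((mem_iff_maxPt hA x).1 (hSA hxS)))

lemma sInf_imap {A : Set (Submodule 𝕂 V)} {C : Set (Submodule 𝕂' V')}
    (hA : IsArrangement A) (hC : IsArrangement C)
    (e : ↥(interLattice A) ≃o ↥(interLattice C)) {S : Set (Submodule 𝕂 V)} (hSA : S ⊆ A) :
    ((e ⟨sInf S, sInf_mem_interLattice hSA⟩ : ↥(interLattice C)) : Submodule 𝕂' V')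
      = sInf (imap e S) := by
  apply le_antisymm
  · apply le_sInf
    rintro _ ⟨x, hxS, rfl⟩
    have hle : (⟨sInf S, sInf_mem_interLattice hSA⟩ : ↥(interLattice A)) ≤ x := sInf_le hxS
    exact e.monotone hle
  · set m' : ↥(interLattice C) :=
      ⟨sInf (imap e S), sInf_mem_interLattice (imap_subset hA hC e hSA)⟩ with hm'
    show m' ≤ e ⟨sInf S, sInf_mem_interLattice hSA⟩
    have key : e.symm m' ≤ ⟨sInf S, sInf_mem_interLattice hSA⟩ := by
      show ((e.symm m' : ↥(interLattice A)) : Submodule 𝕂 V) ≤ sInf S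
      apply le_sInf
      intro H hH
      have hx : m' ≤ e ⟨H, mem_interLattice_of_mem (hSA hH)⟩ := by
        show (m' : Submodule 𝕂' V') ≤ _
        exact sInf_le ⟨⟨H, mem_interLattice_of_mem (hSA hH)⟩, hH, rfl⟩
      have h2 := e.symm.monotone hx
      exact (by simpa using h2 : e.symm m' ≤ ⟨H, mem_interLattice_of_mem (hSA hH)⟩)
    have h3 := e.monotone key
    simpa using h3

lemma imap_pair {A : Set (Submodule 𝕂 V)} {C : Set (Submodule 𝕂' V')}
    (e : ↥(interLattice A) ≃o ↥(interLattice C)) {H H' : Submodule 𝕂 V}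
    (hH : H ∈ A) (hH' : H' ∈ A) :
    imap e {H, H'} = {((e ⟨H, mem_interLattice_of_mem hH⟩ : ↥(interLattice C)) : Submodule 𝕂' V'),
      ((e ⟨H', mem_interLattice_of_mem hH'⟩ : ↥(interLattice C)) : Submodule 𝕂' V')} := by
  ext K
  constructor
  · rintro ⟨x, hx, rfl⟩
    rcases hx with hx | hx
    · left
      have hxe : x = ⟨H, mem_interLattice_of_mem hH⟩ := Subtype.ext hx
      rw [hxe]
    · right
      have hxe : x = ⟨H', mem_interLattice_of_mem hH'⟩ := Subtype.ext hx
      rw [hxe]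
      rfl
  · rintro (rfl | rfl)
    · exact ⟨⟨H, mem_interLattice_of_mem hH⟩, Or.inl rfl, rfl⟩
    · exact ⟨⟨H', mem_interLattice_of_mem hH'⟩, Or.inr rfl, rfl⟩

lemma e_inf {A : Set (Submodule 𝕂 V)} {C : Set (Submodule 𝕂' V')}
    (hA : IsArrangement A) (hC : IsArrangement C)
    (e : ↥(interLattice A) ≃o ↥(interLattice C)) {H H' : Submodule 𝕂 V}
    (hH : H ∈ A) (hH' : H' ∈ A) :
    ((e ⟨H ⊓ H', inf_mem_interLattice hH hH'⟩ : ↥(interLattice C)) : Submodule 𝕂' V')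
      = ((e ⟨H, mem_interLattice_of_mem hH⟩ : ↥(interLattice C)) : Submodule 𝕂' V')
        ⊓ ((e ⟨H', mem_interLattice_of_mem hH'⟩ : ↥(interLattice C)) : Submodule 𝕂' V') := by
  have hpair : ({H, H'} : Set (Submodule 𝕂 V)) ⊆ A := by
    rintro x (rfl | rfl)
    exacts [hH, hH']
  have h1 := sInf_imap hA hC e hpair
  have h2 : (⟨sInf {H, H'}, sInf_mem_interLattice hpair⟩ : ↥(interLattice A))
      = ⟨H ⊓ H', inf_mem_interLattice hH hH'⟩ := Subtype.ext sInf_pair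
  rw [h2] at h1
  rw [h1, imap_pair e hH hH', sInf_pair]

lemma imap_diff {A : Set (Submodule 𝕂 V)} {C : Set (Submodule 𝕂' V')}
    (e : ↥(interLattice A) ≃o ↥(interLattice C)) (S : Set (Submodule 𝕂 V))
    (x : ↥(interLattice A)) :
    imap e (S \ {(x : Submodule 𝕂 V)}) = imap e S \ {((e x : ↥(interLattice C)) : Submodule 𝕂' V')} := by
  ext K
  constructor
  · rintro ⟨y, ⟨hyS, hyne⟩, rfl⟩
    refine ⟨⟨y, hyS, rfl⟩, ?_⟩
    intro h
    apply hyne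
    rw [Set.mem_singleton_iff] at h ⊢
    have : e y = e x := Subtype.ext h
    rw [e.injective this]
  · rintro ⟨⟨y, hyS, rfl⟩, hne⟩
    refine ⟨y, ⟨hyS, ?_⟩, rfl⟩
    intro h
    apply hne
    rw [Set.mem_singleton_iff] at h ⊢
    have : y = x := Subtype.ext h
    rw [this]

lemma subset_imap {A : Set (Submodule 𝕂 V)} {C : Set (Submodule 𝕂' V')}
    (hA : IsArrangement A) (hC : IsArrangement C)
    (e : ↥(interLattice A) ≃o ↥(interLattice C)) :
    C ⊆ imap e A := by
  intro K hK
  refine ⟨e.symm ⟨K, mem_interLattice_of_mem hK⟩, ?_, ?_⟩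
  · exact (mem_iff_maxPt hA _).2
      (maxPt_map e.symm ((mem_iff_maxPt hC ⟨K, mem_interLattice_of_mem hK⟩).1 hK))
  · rw [e.apply_symm_apply]

lemma transfer_lcBasis {A : Set (Submodule 𝕂 V)} {C : Set (Submodule 𝕂' V')}
    (hA : IsArrangement A) (hC : IsArrangement C)
    (e : ↥(interLattice A) ≃o ↥(interLattice C)) {B : Set (Submodule 𝕂 V)} (hBA : B ⊆ A)
    (hind : ∀ H ∈ B, ¬ sInf (B \ {H}) ≤ H) (hlc : lineClosure A B = A) :
    ∃ B' ⊆ C, (∀ H ∈ B', ¬ sInf (B' \ {H}) ≤ H) ∧ lineClosure C B' = C := by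
  refine ⟨imap e B, imap_subset hA hC e hBA, ?_, ?_⟩
  · rintro _ ⟨x, hxB, rfl⟩ hle
    apply hind x.1 hxB
    have hdiff : B \ {x.1} ⊆ A := fun K hK => hBA hK.1
    have h1 := sInf_imap hA hC e hdiff
    rw [imap_diff e B x] at h1
    rw [← h1] at hle
    have h2 : e ⟨sInf (B \ {x.1}), sInf_mem_interLattice hdiff⟩ ≤ e x := hle
    exact e.le_iff_le.1 h2
  · apply Set.Subset.antisymm
    · refine Set.sInter_subset_of_mem ?_
      exact ⟨⟨subset_rfl, fun _ _ _ _ K hK => hK.1⟩, imap_subset hA hC e hBA⟩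
    · intro K hK
      rw [lineClosure, Set.mem_sInter]
      rintro T' ⟨hT'lc, hB'T'⟩
      have hTlc : IsLineClosed A
          {H | ∃ hH : H ∈ A,
            ((e ⟨H, mem_interLattice_of_mem hH⟩ : ↥(interLattice C)) : Submodule 𝕂' V') ∈ T'} := by
        constructor
        · rintro H ⟨hHA, _⟩
          exact hHA
        · rintro H ⟨hHA, hHT'⟩ H' ⟨hH'A, hH'T'⟩ K' ⟨hK'A, hle⟩
          refine ⟨hK'A, ?_⟩
          apply hT'lc.2 _ hHT' _ hH'T'
          refine ⟨(mem_iff_maxPt hC _).2 (maxPt_map e ((mem_iff_maxPt hA _).1 hK'A)), ?_⟩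
          rw [← e_inf hA hC e hHA hH'A]
          have hle2 : (⟨H ⊓ H', inf_mem_interLattice hHA hH'A⟩ : ↥(interLattice A))
              ≤ ⟨K', mem_interLattice_of_mem hK'A⟩ := hle
          exact e.monotone hle2
      have hBT : B ⊆ {H | ∃ hH : H ∈ A,
          ((e ⟨H, mem_interLattice_of_mem hH⟩ : ↥(interLattice C)) : Submodule 𝕂' V') ∈ T'} := by
        intro H hH
        exact ⟨hBA hH, hB'T' ⟨⟨H, mem_interLattice_of_mem (hBA hH)⟩, hH, rfl⟩⟩
      have hAT : A ⊆ {H | ∃ hH : H ∈ A,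
          ((e ⟨H, mem_interLattice_of_mem hH⟩ : ↥(interLattice C)) : Submodule 𝕂' V') ∈ T'} := by
        have hsub : lineClosure A B ⊆ {H | ∃ hH : H ∈ A,
            ((e ⟨H, mem_interLattice_of_mem hH⟩ : ↥(interLattice C)) : Submodule 𝕂' V') ∈ T'} :=
          Set.sInter_subset_of_mem ⟨hTlc, hBT⟩
        rwa [hlc] at hsub
      obtain ⟨x, hxA, hxK⟩ := subset_imap hA hC e hK
      obtain ⟨hxA2, hxT'⟩ := hAT hxA
      rw [← hxK]
      exact hxT'


end Transfer

/-- **Proposition 2.4** (`prop:lcbasis`, Falk): let `A` be a central arrangement of rank `r`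
and suppose `B ⊆ A` consists of exactly `r` hyperplanes with `r(∩_{H ∈ B} H) = r` and
`lc(B) = A` (an lc-basis).  Then `A` is combinatorially formal. -/
theorem lc_basis_implies_combinatorially_formal {𝕂 : Type*} [Field 𝕂] {ℓ : ℕ}
    (A : Set (Submodule 𝕂 (Fin ℓ → 𝕂))) (hA : IsArrangement A)
    (r : ℕ) (hr : rk (sInf A) = r)
    (B : Set (Submodule 𝕂 (Fin ℓ → 𝕂))) (hBA : B ⊆ A)
    (hcard : B.ncard = r) (hrkB : rk (sInf B) = r) (hlc : lineClosure A B = A) :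
    IsCombinatoriallyFormal A := by
  intro 𝕂' _ ℓ' C hC hiso
  obtain ⟨e⟩ := hiso
  have hindA : ∀ H ∈ B, ¬ sInf (B \ {H}) ≤ H := by
    have hfinB : B.Finite := hA.1.subset hBA
    have hypB : ∀ H ∈ B, IsHyperplane H := fun H hH => hA.2 H (hBA hH)
    apply indep_of_rk hfinB hypB
    rw [hrkB, hcard]
  obtain ⟨B', hB'C, hind', hlc'⟩ := transfer_lcBasis hA hC e hBA hindA hlc
  exact formal_of_lcBasis hB'C hind' hlc'
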